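/- Let a, b, c, d be real numbers with b > d and c > a, and set e = (b−d)/((b−d)+(c−a)) ∈ (0,1) and β = e(c−a) > 0. Let r > 0 and let K : [−r,0] → ℝ be a continuous nonnegative kernel with ∫_{−r}^0 K(s) ds = 1. If ∫_{−r}^0 (−s)·K(s) ds < 1/β (i.e., the average delay is less than 1/(e(c−a))), then every λ ∈ ℂ satisfying the characteristic equation λ + β∫_{−r}^0 K(s)·e^{λ s} ds = 0 has Re λ < 0. -/

import Mathlib

open scoped Real

/-- For a snowdrift game (`b > d`, `c > a`) with interior equilibrium
`e = (b−d)/((b−d)+(c−a))` and `β = e(c−a)`, if the average delay `∫₀^r s K(s) ds` of the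
continuous nonnegative kernel `K` (a probability density on `[−r,0]`) is less than `1/β`,
then every root `λ` of the characteristic equation `λ + β ∫_{−r}^0 K(s) e^{λ s} ds = 0`
has negative real part. -/
theorem stmt_15 (a b c d : ℝ) (hbd : d < b) (hca : a < c)
    (e β : ℝ) (he : e = (b - d) / ((b - d) + (c - a))) (hβ : β = e * (c - a))
    (r : ℝ) (hr : 0 < r) (K : ℝ → ℝ)
    (hKcont : ContinuousOn K (Set.Icc (-r) 0))
    (hKnonneg : ∀ s ∈ Set.Icc (-r) 0, 0 ≤ K s)
    (hKprob : (∫ s in (-r)..(0:ℝ), K s) = 1)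
    (havg : (∫ s in (-r)..(0:ℝ), (-s) * K s) < 1 / β) :
    ∀ lam : ℂ,
      lam + (β : ℂ) * (∫ s in (-r)..(0:ℝ), (K s : ℂ) * Complex.exp (lam * (s : ℂ))) = 0 →
      lam.re < 0 := by
  intro lam hroot
  have hbd' : (0:ℝ) < b - d := sub_pos.mpr hbd
  have hca' : (0:ℝ) < c - a := sub_pos.mpr hca
  have hepos : 0 < e := by rw [he]; positivity
  have hβpos : 0 < β := by rw [hβ]; positivity
  by_contra hre
  push_neg at hre
  have hrle : -r ≤ (0:ℝ) := by linarith
  have hIcc : Set.uIcc (-r) (0:ℝ) = Set.Icc (-r) 0 := Set.uIcc_of_le hrle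
  have hKC : ContinuousOn (fun s : ℝ => (K s : ℂ)) (Set.Icc (-r) 0) :=
    Complex.continuous_ofReal.comp_continuousOn hKcont
  -- lam ≠ 0
  have hKint : (∫ s in (-r)..(0:ℝ), ((K s : ℝ) : ℂ)) = 1 := by
    rw [intervalIntegral.integral_ofReal, hKprob]; norm_num
  have hlam0 : lam ≠ 0 := by
    intro h
    rw [h] at hroot
    simp only [zero_mul, Complex.exp_zero, mul_one, zero_add] at hroot
    rw [hKint, mul_one] at hroot
    exact absurd (Complex.ofReal_eq_zero.mp hroot) (by positivity)
  -- pointwise bound ‖(1 - e^{λs})/λ‖ ≤ -s on [-r,0]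
  have hbnd : ∀ s ∈ Set.Icc (-r) (0:ℝ),
      ‖(1 - Complex.exp (lam * s)) / lam‖ ≤ -s := by
    intro s hs
    have hs0 : s ≤ 0 := hs.2
    have key : (1 - Complex.exp (lam * s)) / lam
        = ∫ u in s..(0:ℝ), Complex.exp (lam * u) := by
      rw [integral_exp_mul_complex hlam0]
      norm_num
    rw [key]
    have hb : ‖∫ u in s..(0:ℝ), Complex.exp (lam * u)‖
        ≤ |∫ _u in s..(0:ℝ), (1:ℝ)| := by
      apply intervalIntegral.norm_integral_le_abs_of_norm_le _ intervalIntegrable_const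
      rw [Set.uIoc_of_le hs0]
      refine MeasureTheory.ae_restrict_of_forall_mem measurableSet_Ioc ?_
      intro u hu
      rw [Complex.norm_exp]
      have : (lam * u).re = lam.re * u := by simp [Complex.mul_re]
      rw [this, Real.exp_le_one_iff]
      exact mul_nonpos_of_nonneg_of_nonpos hre hu.2
    simpa [abs_of_nonpos hs0] using hb
  -- integrability facts
  have I2 : IntervalIntegrable (fun s : ℝ => (K s : ℂ) * Complex.exp (lam * s))
      MeasureTheory.volume (-r) 0 := by
    apply ContinuousOn.intervalIntegrable
    rw [hIcc]
    exact hKC.mul ((Complex.continuous_exp.comp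
      (continuous_const.mul Complex.continuous_ofReal)).continuousOn)
  have I3 : IntervalIntegrable
      (fun s : ℝ => (K s : ℂ) * ((1 - Complex.exp (lam * s)) / lam))
      MeasureTheory.volume (-r) 0 := by
    apply ContinuousOn.intervalIntegrable
    rw [hIcc]
    exact hKC.mul (((continuous_const.sub (Complex.continuous_exp.comp
      (continuous_const.mul Complex.continuous_ofReal))).div_const lam).continuousOn)
  have I1 : IntervalIntegrable (fun s : ℝ => (K s : ℂ)) MeasureTheory.volume (-r) 0 := by
    apply ContinuousOn.intervalIntegrable
    rw [hIcc]; exact hKC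
  have I4 : IntervalIntegrable (fun s : ℝ => (-s) * K s) MeasureTheory.volume (-r) 0 := by
    apply ContinuousOn.intervalIntegrable
    rw [hIcc]
    exact (continuous_neg.continuousOn.mul hKcont)
  set M : ℂ := ∫ s in (-r)..(0:ℝ), (K s : ℂ) * ((1 - Complex.exp (lam * s)) / lam) with hM
  -- ∫ K e^{λs} = 1 - λ M
  have hJ : (∫ s in (-r)..(0:ℝ), (K s : ℂ) * Complex.exp (lam * s)) = 1 - lam * M := by
    have hfun : ∀ s : ℝ, (K s : ℂ) * Complex.exp (lam * s)
        = (K s : ℂ) - lam * ((K s : ℂ) * ((1 - Complex.exp (lam * s)) / lam)) := by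
      intro s; field_simp; ring
    rw [intervalIntegral.integral_congr (fun s _ => hfun s),
      intervalIntegral.integral_sub I1 (I3.const_mul lam),
      intervalIntegral.integral_const_mul, hKint, hM]
  -- the key algebraic identity
  have hEq : lam * (1 - (β : ℂ) * M) = -(β : ℂ) := by
    rw [hJ] at hroot
    ring_nf at hroot ⊢
    linear_combination hroot
  -- bound on ‖M‖
  have hMle : ‖M‖ ≤ ∫ s in (-r)..(0:ℝ), (-s) * K s := by
    have h := intervalIntegral.norm_integral_le_abs_of_norm_le (μ := MeasureTheory.volume)
      (f := fun s : ℝ => (K s : ℂ) * ((1 - Complex.exp (lam * s)) / lam))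
      (g := fun s : ℝ => (-s) * K s) (a := -r) (b := 0) ?_ I4
    · have hτnn : 0 ≤ ∫ s in (-r)..(0:ℝ), (-s) * K s := by
        apply intervalIntegral.integral_nonneg hrle
        intro u hu
        exact mul_nonneg (by linarith [hu.2]) (hKnonneg u hu)
      rwa [abs_of_nonneg hτnn] at h
    · rw [Set.uIoc_of_le hrle]
      refine MeasureTheory.ae_restrict_of_forall_mem measurableSet_Ioc ?_
      intro s hs
      have hs' : s ∈ Set.Icc (-r) (0:ℝ) := Set.Ioc_subset_Icc_self hs
      rw [norm_mul, Complex.norm_real, Real.norm_eq_abs,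
        abs_of_nonneg (hKnonneg s hs')]
      calc K s * ‖(1 - Complex.exp (lam * s)) / lam‖
          ≤ K s * (-s) := mul_le_mul_of_nonneg_left (hbnd s hs') (hKnonneg s hs')
        _ = (-s) * K s := mul_comm _ _
  have hβM : β * ‖M‖ < 1 := by
    have h1 : (∫ s in (-r)..(0:ℝ), (-s) * K s) * β < 1 := (lt_div_iff₀ hβpos).mp havg
    nlinarith [norm_nonneg M]
  -- real part of 1 - βM is positive
  set w : ℂ := 1 - (β : ℂ) * M with hw
  have hwre : 0 < w.re := by
    have h1 : w.re = 1 - β * M.re := by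
      simp [hw, Complex.sub_re, Complex.mul_re]
    have h2 : M.re ≤ ‖M‖ := Complex.re_le_norm M
    nlinarith
  have hwne : w ≠ 0 := fun h => by simp [h] at hwre
  have hnsq : 0 < Complex.normSq w := Complex.normSq_pos.mpr hwne
  -- take real parts of lam * |w|² = -β * conj w
  have h3 : lam * ((Complex.normSq w : ℝ) : ℂ) = -(β : ℂ) * (starRingEnd ℂ) w := by
    rw [← Complex.mul_conj]
    linear_combination (starRingEnd ℂ) w * hEq
  have h4 : lam.re * Complex.normSq w = -(β * w.re) := by
    have := congrArg Complex.re h3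
    simpa [Complex.mul_re, Complex.conj_re, Complex.conj_im] using this
  nlinarith [mul_nonneg hre hnsq.le, mul_pos hβpos hwre]
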